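/- arXiv:1902.07992 — 2 statements merged into one kernel-verified Lean document; each statement's English description precedes it below -/
import Mathlib

section
/- Let M₀ = [[r, pλ],[-qλ⁻¹, r*]] and M₁ = [[r, -pλ],[qλ⁻¹, r*]] be SL₂-valued loops with r r* + p q = 1. If q/p* admits a factorization q/p* = δε x₊* x₊ with x₊ : D₊ → ℂ* holomorphic and non-vanishing, then setting X = diag(√x₊, 1/√x₊), both X M₀ X⁻¹ and X M₁ X⁻¹ have the form [[r, s],[-ε s*, r*]] and [[r, -s],[ε s*, r*]] respectively with s = p x₊ λ, and hence are unitary with respect to the involution P*(λ) = η (P(δ/λ̄)̄ᵀ)⁻¹ η⁻¹. -/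
open Complex ComplexConjugate Matrix

lemma ct2 (a b c d : ℂ) :
    (!![a, b; c, d] : Matrix (Fin 2) (Fin 2) ℂ)ᴴ = !![conj a, conj c; conj b, conj d] := by
  ext i j; fin_cases i <;> fin_cases j <;> simp [Matrix.conjTranspose_apply]

lemma diag_inv (yv : ℂ) (h : yv ≠ 0) :
    (!![yv, 0; 0, yv⁻¹] : Matrix (Fin 2) (Fin 2) ℂ)⁻¹ = !![yv⁻¹, 0; 0, yv] := by
  apply Matrix.inv_eq_right_inv
  rw [Matrix.mul_fin_two, Matrix.one_fin_two]
  simp [mul_inv_cancel₀ h, inv_mul_cancel₀ h]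

lemma conj_aux (yv aa b c d : ℂ) (h : yv ≠ 0) :
    !![yv, 0; 0, yv⁻¹] * !![aa, b; c, d] * (!![yv, 0; 0, yv⁻¹] : Matrix (Fin 2) (Fin 2) ℂ)⁻¹
      = !![aa, yv ^ 2 * b; c / yv ^ 2, d] := by
  have h2 : yv ^ 2 ≠ 0 := pow_ne_zero 2 h
  rw [diag_inv yv h, Matrix.mul_fin_two, Matrix.mul_fin_two]
  have e1 : (yv * aa + 0 * c) * yv⁻¹ + (yv * b + 0 * d) * 0 = aa := by field_simp; ring
  have e2 : (yv * aa + 0 * c) * 0 + (yv * b + 0 * d) * yv = yv ^ 2 * b := by ring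
  have e3 : (0 * aa + yv⁻¹ * c) * yv⁻¹ + (0 * b + yv⁻¹ * d) * 0 = c / yv ^ 2 := by
    rw [eq_div_iff h2]
    linear_combination (c * (yv * yv⁻¹ + 1)) * mul_inv_cancel₀ h
  have e4 : (0 * aa + yv⁻¹ * c) * 0 + (0 * b + yv⁻¹ * d) * yv = d := by field_simp; ring
  rw [e1, e2, e3, e4]

lemma conj_unitary (ε : ℂ) (hε : ε = 1 ∨ ε = -1)
    (η : Matrix (Fin 2) (Fin 2) ℂ)
    (hη : η = if ε = 1 then (1 : Matrix (Fin 2) (Fin 2) ℂ)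
      else !![Complex.I, 0; 0, -Complex.I])
    (a b c d : ℂ)
    (hdet : d * conj a + ε * c * conj b = 1) :
    η * ((!![a, b; -(ε * conj c), conj d] : Matrix (Fin 2) (Fin 2) ℂ)ᴴ)⁻¹ * η⁻¹
      = !![d, c; -(ε * conj b), conj a] := by
  have hεc : conj ε = ε := by rcases hε with h | h <;> simp [h]
  have hinv : ((!![a, b; -(ε * conj c), conj d] : Matrix (Fin 2) (Fin 2) ℂ)ᴴ)⁻¹
      = !![d, ε * c; -(conj b), conj a] := by
    apply Matrix.inv_eq_right_inv
    rw [ct2, Matrix.mul_fin_two, Matrix.one_fin_two]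
    have e1 : conj a * d + conj (-(ε * conj c)) * -conj b = 1 := by
      simp only [map_neg, _root_.map_mul, hεc, Complex.conj_conj]
      linear_combination hdet
    have e2 : conj a * (ε * c) + conj (-(ε * conj c)) * conj a = 0 := by
      simp only [map_neg, _root_.map_mul, hεc, Complex.conj_conj]; ring
    have e3 : conj b * d + conj (conj d) * -conj b = 0 := by
      simp only [Complex.conj_conj]; ring
    have e4 : conj b * (ε * c) + conj (conj d) * conj a = 1 := by
      simp only [Complex.conj_conj]
      linear_combination hdet
    rw [e1, e2, e3, e4]
  rw [hinv]
  rcases hε with h | h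
  · simp only [h, if_pos rfl] at hη
    rw [hη]
    simp [h]
  · have : ¬ (ε = 1) := by rw [h]; norm_num
    rw [hη, if_neg this]
    have hIinv : (!![Complex.I, 0; 0, -Complex.I] : Matrix (Fin 2) (Fin 2) ℂ)⁻¹
        = !![-Complex.I, 0; 0, Complex.I] := by
      apply Matrix.inv_eq_right_inv
      rw [Matrix.mul_fin_two, Matrix.one_fin_two]
      simp [Complex.I_mul_I]
    rw [hIinv, Matrix.mul_fin_two, Matrix.mul_fin_two]
    ext i j
    fin_cases i <;> fin_cases j <;>
      simp only [Matrix.cons_val', Matrix.cons_val_zero, Matrix.cons_val_one, Matrix.head_cons,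
        Matrix.head_fin_const, Matrix.empty_val', Matrix.cons_val_fin_one, Matrix.of_apply] <;>
      subst h <;> ring_nf <;>
      simp [Complex.I_sq]

lemma conj_unitary' (ε : ℂ) (hε : ε = 1 ∨ ε = -1)
    (η : Matrix (Fin 2) (Fin 2) ℂ)
    (hη : η = if ε = 1 then (1 : Matrix (Fin 2) (Fin 2) ℂ)
      else !![Complex.I, 0; 0, -Complex.I])
    (a b c d : ℂ)
    (hdet : d * conj a + ε * c * conj b = 1) :
    η * ((!![a, -b; ε * conj c, conj d] : Matrix (Fin 2) (Fin 2) ℂ)ᴴ)⁻¹ * η⁻¹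
      = !![d, -c; ε * conj b, conj a] := by
  have h1 : (!![a, -b; ε * conj c, conj d] : Matrix (Fin 2) (Fin 2) ℂ)
      = !![a, -b; -(ε * conj (-c)), conj d] := by
    ext i j; fin_cases i <;> fin_cases j <;> simp [map_neg]
  have h2 : (!![d, -c; ε * conj b, conj a] : Matrix (Fin 2) (Fin 2) ℂ)
      = !![d, -c; -(ε * conj (-b)), conj a] := by
    ext i j; fin_cases i <;> fin_cases j <;> simp [map_neg]
  rw [h1, h2]
  exact conj_unitary ε hε η hη a (-b) (-c) d (by simp only [map_neg]; linear_combination hdet)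

/-- Unitarization of the isosceles trinoid monodromies. If `q/p* = δε x₊* x₊`
with `x₊` nonvanishing, then conjugating `M₀`, `M₁` by
`X = diag(√x₊, 1/√x₊)` yields matrices of the form `[[r, s],[-ε s*, r*]]`,
`[[r, -s],[ε s*, r*]]` with `s = p x₊ λ`, which are unitary for the involution
`P*(λ) = η (P(δ/λ̄)ᴴ)⁻¹ η⁻¹`. Here `f*(λ) = conj (f (δ/λ̄))` on scalars. -/
theorem stmt9 (δ ε : ℂ) (hδ : δ = 1 ∨ δ = -1) (hε : ε = 1 ∨ ε = -1)
    (p q r xp y : ℂ → ℂ) (η : Matrix (Fin 2) (Fin 2) ℂ)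
    (hη : η = if ε = 1 then (1 : Matrix (Fin 2) (Fin 2) ℂ)
      else !![Complex.I, 0; 0, -Complex.I])
    (hdet : ∀ lam : ℂ, lam ≠ 0 →
      r lam * conj (r (δ / conj lam)) + p lam * q lam = 1)
    (hp : ∀ lam : ℂ, lam ≠ 0 → conj (p (δ / conj lam)) = δ * p lam)
    (hq : ∀ lam : ℂ, lam ≠ 0 → conj (q (δ / conj lam)) = δ * q lam)
    (hfact : ∀ lam : ℂ, ‖lam‖ = 1 →
      q lam / conj (p (δ / conj lam)) = δ * ε * conj (xp (δ / conj lam)) * xp lam)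
    (hxp : ∀ lam : ℂ, ‖lam‖ = 1 → xp lam ≠ 0)
    (hy : ∀ lam : ℂ, y lam ^ 2 = xp lam)
    (M₀ M₁ X P₀ P₁ : ℂ → Matrix (Fin 2) (Fin 2) ℂ)
    (hM₀ : ∀ lam, M₀ lam =
      !![r lam, p lam * lam; -(q lam) * lam⁻¹, conj (r (δ / conj lam))])
    (hM₁ : ∀ lam, M₁ lam =
      !![r lam, -(p lam * lam); q lam * lam⁻¹, conj (r (δ / conj lam))])
    (hX : ∀ lam, X lam = !![y lam, 0; 0, (y lam)⁻¹])
    (hP₀ : ∀ lam, P₀ lam =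
      !![r lam, p lam * xp lam * lam;
         -(ε * conj (p (δ / conj lam) * xp (δ / conj lam) * (δ / conj lam))),
         conj (r (δ / conj lam))])
    (hP₁ : ∀ lam, P₁ lam =
      !![r lam, -(p lam * xp lam * lam);
         ε * conj (p (δ / conj lam) * xp (δ / conj lam) * (δ / conj lam)),
         conj (r (δ / conj lam))]) :
    (∀ lam : ℂ, ‖lam‖ = 1 →
      X lam * M₀ lam * (X lam)⁻¹ = P₀ lam ∧
      X lam * M₁ lam * (X lam)⁻¹ = P₁ lam) ∧
    (∀ lam : ℂ, ‖lam‖ = 1 →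
      η * ((P₀ (δ / conj lam)).conjTranspose)⁻¹ * η⁻¹ = P₀ lam ∧
      η * ((P₁ (δ / conj lam)).conjTranspose)⁻¹ * η⁻¹ = P₁ lam) := by
  constructor
  · intro lam hl1
    have hδ0 : δ ≠ 0 := by rcases hδ with h | h <;> simp [h]
    have hε0 : ε ≠ 0 := by rcases hε with h | h <;> simp [h]
    have hδc : conj δ = δ := by rcases hδ with h | h <;> simp [h]
    have hδn : ‖δ‖ = 1 := by rcases hδ with h | h <;> simp [h]
    have hl0 : lam ≠ 0 := by intro h; rw [h] at hl1; simp at hl1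
    have hcl0 : conj lam ≠ 0 := by simpa using hl0
    have hlc : lam * conj lam = 1 := by
      rw [Complex.mul_conj]
      norm_cast
      rw [Complex.normSq_eq_norm_sq, hl1]; norm_num
    have hμ0 : δ / conj lam ≠ 0 := div_ne_zero hδ0 hcl0
    have hμn : ‖δ / conj lam‖ = 1 := by
      rw [norm_div, hδn, RCLike.norm_conj, hl1]; norm_num
    have hconjμ : conj (δ / conj lam) = δ * conj lam := by
      rw [map_div₀, hδc, Complex.conj_conj, div_eq_iff hl0]
      linear_combination -δ * hlc
    have hback : δ / conj (δ / conj lam) = lam := by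
      rw [hconjμ]
      field_simp
      linear_combination -hlc
    have hxpl : xp lam ≠ 0 := hxp lam hl1
    have hxpμ : xp (δ / conj lam) ≠ 0 := hxp _ hμn
    have hcxpμ : conj (xp (δ / conj lam)) ≠ 0 := by simpa using hxpμ
    have hyl0 : y lam ≠ 0 := by
      intro h0
      apply hxpl; rw [← hy lam, h0]; ring
    have hplamc : conj (p (δ / conj lam)) = δ * p lam := hp lam hl0
    have hrd : r lam * conj (r (δ / conj lam)) + p lam * q lam = 1 := hdet lam hl0
    have hpc0 : conj (p (δ / conj lam)) ≠ 0 := by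
      intro h0
      have hf := hfact lam hl1
      rw [h0, div_zero] at hf
      exact (mul_ne_zero (mul_ne_zero (mul_ne_zero hδ0 hε0) hcxpμ) hxpl) hf.symm
    have hqval : q lam = δ * ε * conj (xp (δ / conj lam)) * xp lam * conj (p (δ / conj lam)) :=
      (div_eq_iff hpc0).mp (hfact lam hl1)
    rw [hplamc] at hqval
    have hinvl : lam⁻¹ = conj lam := by
      rw [inv_eq_one_div, eq_comm, eq_div_iff hl0]
      linear_combination hlc
    have hdet2 : r lam * conj (r (δ / conj lam))
        + ε * (p lam * xp lam * lam) * conj (p (δ / conj lam) * xp (δ / conj lam) * (δ / conj lam)) = 1 := by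
      rw [_root_.map_mul, _root_.map_mul, hconjμ, hplamc]
      linear_combination hrd - p lam * hqval +
        δ * δ * ε * conj (xp (δ / conj lam)) * xp lam * (p lam) ^ 2 * hlc
    have E3 : (-(q lam) * lam⁻¹) / (y lam) ^ 2
        = -(ε * conj (p (δ / conj lam) * xp (δ / conj lam) * (δ / conj lam))) := by
      rw [hy lam, _root_.map_mul, _root_.map_mul, hconjμ, hplamc, div_eq_iff hxpl, hinvl]
      linear_combination (-(conj lam)) * hqval
    have E2 : y lam ^ 2 * (p lam * lam) = p lam * xp lam * lam := by
      rw [hy lam]; ring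
    have E2' : y lam ^ 2 * (-(p lam * lam)) = -(p lam * xp lam * lam) := by
      rw [hy lam]; ring
    have E3' : (q lam * lam⁻¹) / (y lam) ^ 2
        = ε * conj (p (δ / conj lam) * xp (δ / conj lam) * (δ / conj lam)) := by
      linear_combination -E3
    constructor
    · rw [hX, hM₀, conj_aux _ _ _ _ _ hyl0, hP₀, E2, E3]
    · rw [hX, hM₁, conj_aux _ _ _ _ _ hyl0, hP₁, E2', E3']
  · intro lam hl1
    have hδ0 : δ ≠ 0 := by rcases hδ with h | h <;> simp [h]
    have hε0 : ε ≠ 0 := by rcases hε with h | h <;> simp [h]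
    have hδc : conj δ = δ := by rcases hδ with h | h <;> simp [h]
    have hδn : ‖δ‖ = 1 := by rcases hδ with h | h <;> simp [h]
    have hl0 : lam ≠ 0 := by intro h; rw [h] at hl1; simp at hl1
    have hcl0 : conj lam ≠ 0 := by simpa using hl0
    have hlc : lam * conj lam = 1 := by
      rw [Complex.mul_conj]
      norm_cast
      rw [Complex.normSq_eq_norm_sq, hl1]; norm_num
    have hμ0 : δ / conj lam ≠ 0 := div_ne_zero hδ0 hcl0
    have hμn : ‖δ / conj lam‖ = 1 := by
      rw [norm_div, hδn, RCLike.norm_conj, hl1]; norm_num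
    have hconjμ : conj (δ / conj lam) = δ * conj lam := by
      rw [map_div₀, hδc, Complex.conj_conj, div_eq_iff hl0]
      linear_combination -δ * hlc
    have hback : δ / conj (δ / conj lam) = lam := by
      rw [hconjμ]
      field_simp
      linear_combination -hlc
    have hxpl : xp lam ≠ 0 := hxp lam hl1
    have hxpμ : xp (δ / conj lam) ≠ 0 := hxp _ hμn
    have hcxpμ : conj (xp (δ / conj lam)) ≠ 0 := by simpa using hxpμ
    have hyl0 : y lam ≠ 0 := by
      intro h0
      apply hxpl; rw [← hy lam, h0]; ring
    have hplamc : conj (p (δ / conj lam)) = δ * p lam := hp lam hl0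
    have hrd : r lam * conj (r (δ / conj lam)) + p lam * q lam = 1 := hdet lam hl0
    have hpc0 : conj (p (δ / conj lam)) ≠ 0 := by
      intro h0
      have hf := hfact lam hl1
      rw [h0, div_zero] at hf
      exact (mul_ne_zero (mul_ne_zero (mul_ne_zero hδ0 hε0) hcxpμ) hxpl) hf.symm
    have hqval : q lam = δ * ε * conj (xp (δ / conj lam)) * xp lam * conj (p (δ / conj lam)) :=
      (div_eq_iff hpc0).mp (hfact lam hl1)
    rw [hplamc] at hqval
    have hinvl : lam⁻¹ = conj lam := by
      rw [inv_eq_one_div, eq_comm, eq_div_iff hl0]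
      linear_combination hlc
    have hdet2 : r lam * conj (r (δ / conj lam))
        + ε * (p lam * xp lam * lam) * conj (p (δ / conj lam) * xp (δ / conj lam) * (δ / conj lam)) = 1 := by
      rw [_root_.map_mul, _root_.map_mul, hconjμ, hplamc]
      linear_combination hrd - p lam * hqval +
        δ * δ * ε * conj (xp (δ / conj lam)) * xp lam * (p lam) ^ 2 * hlc
    have E3 : (-(q lam) * lam⁻¹) / (y lam) ^ 2
        = -(ε * conj (p (δ / conj lam) * xp (δ / conj lam) * (δ / conj lam))) := by
      rw [hy lam, _root_.map_mul, _root_.map_mul, hconjμ, hplamc, div_eq_iff hxpl, hinvl]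
      linear_combination (-(conj lam)) * hqval
    constructor
    · have h0 : P₀ (δ / conj lam)
          = !![r (δ / conj lam), p (δ / conj lam) * xp (δ / conj lam) * (δ / conj lam);
               -(ε * conj (p lam * xp lam * lam)), conj (r lam)] := by
        rw [hP₀ (δ / conj lam), hback]
      rw [h0, hP₀ lam]
      exact conj_unitary ε hε η hη _ _ _ _ hdet2
    · have h1 : P₁ (δ / conj lam)
          = !![r (δ / conj lam), -(p (δ / conj lam) * xp (δ / conj lam) * (δ / conj lam));
               ε * conj (p lam * xp lam * lam), conj (r lam)] := by
        rw [hP₁ (δ / conj lam), hback]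
      rw [h1, hP₁ lam]
      exact conj_unitary' ε hε η hη _ _ _ _ hdet2
end

section
/- Define νₖ = ½ - ½√(1 + qₖ κ) and tₖ = cos(2π νₖ), k = 0,1,2, and φ = 1 - t₀² - t₁² - t₂² + 2t₀t₁t₂. Then as a power series in κ at κ = 0, φ(κ) = c κ⁴ + O(κ⁵) with c = (π⁴/64)(q₀+q₁+q₂)(-q₀+q₁+q₂)(q₀-q₁+q₂)(q₀+q₁-q₂). -/
open Complex Asymptotics

private lemma quadO {f : ℂ → ℂ} (hf : AnalyticAt ℂ f 0) (h0 : f 0 = 0) (h1 : deriv f 0 = 0) :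
    f =O[nhds 0] (fun z => z ^ 2) := by
  obtain ⟨p, hp⟩ := hf
  have h := hp.isBigO_sub_partialSum_pow 2
  have hc0 : p 0 (fun _ => 0) = 0 := by rw [hp.coeff_zero]; exact h0
  have hc1 : (p 1 fun _ => 1) = 0 := by rw [← hp.deriv]; exact h1
  have hps : ∀ y : ℂ, p.partialSum 2 y = 0 := by
    intro y
    simp only [FormalMultilinearSeries.partialSum, Finset.sum_range_succ, Finset.sum_range_zero,
      FormalMultilinearSeries.apply_eq_pow_smul_coeff, FormalMultilinearSeries.coeff] at *
    norm_num at hc0 hc1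
    simp [hc0, hc1]
  simp only [zero_add, hps, sub_zero] at h
  have : (fun y : ℂ => ‖y‖ ^ 2) = fun y : ℂ => ‖y ^ 2‖ := by
    funext y; rw [norm_pow]
  rw [this, isBigO_norm_right] at h
  exact h

private lemma linO {f : ℂ → ℂ} (hf : AnalyticAt ℂ f 0) (h0 : f 0 = 0) :
    f =O[nhds 0] (fun z => z) := by
  obtain ⟨p, hp⟩ := hf
  have h := hp.isBigO_sub_partialSum_pow 1
  have hc0 : p 0 (fun _ => 0) = 0 := by rw [hp.coeff_zero]; exact h0
  have hps : ∀ y : ℂ, p.partialSum 1 y = 0 := by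
    intro y
    simp only [FormalMultilinearSeries.partialSum, Finset.sum_range_succ, Finset.sum_range_zero,
      FormalMultilinearSeries.apply_eq_pow_smul_coeff, FormalMultilinearSeries.coeff] at *
    norm_num at hc0
    simp [hc0]
  simp only [zero_add, hps, sub_zero] at h
  have : (fun y : ℂ => ‖y‖ ^ 1) = fun y : ℂ => ‖y ^ 1‖ := by
    funext y; rw [norm_pow]
  rw [this, isBigO_norm_right] at h
  simpa using h

set_option maxHeartbeats 1000000 in
private lemma tri (x y z : ℂ) :
    1 - Complex.cos (2*x)^2 - Complex.cos (2*y)^2 - Complex.cos (2*z)^2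
      - 2*Complex.cos (2*x)*Complex.cos (2*y)*Complex.cos (2*z)
      = -4 * Complex.cos (x+y+z) * Complex.cos (y+z-x) * Complex.cos (x+z-y)
        * Complex.cos (x+y-z) := by
  simp only [Complex.cos_add, Complex.cos_sub, Complex.sin_add, Complex.sin_sub,
    Complex.cos_two_mul]
  linear_combination ((4) * Complex.cos y ^ 4 * Complex.sin z ^ 4 + (-8) * Complex.sin y ^ 2 * Complex.cos y ^ 2 * Complex.sin z ^ 2 * Complex.cos z ^ 2 + (4) * Complex.sin y ^ 4 * Complex.cos z ^ 4 + (-8) * Complex.cos x ^ 2 * Complex.cos y ^ 4 * Complex.sin z ^ 2 * Complex.cos z ^ 2 + (-4) * Complex.cos x ^ 2 * Complex.cos y ^ 4 * Complex.sin z ^ 4 + (-8) * Complex.cos x ^ 2 * Complex.sin y ^ 2 * Complex.cos y ^ 2 * Complex.cos z ^ 4 + (-24) * Complex.cos x ^ 2 * Complex.sin y ^ 2 * Complex.cos y ^ 2 * Complex.sin z ^ 2 * Complex.cos z ^ 2 + (-8) * Complex.cos x ^ 2 * Complex.sin y ^ 2 * Complex.cos y ^ 2 * Complex.sin z ^ 4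 + (-4) * Complex.cos x ^ 2 * Complex.sin y ^ 4 * Complex.cos z ^ 4 + (-8) * Complex.cos x ^ 2 * Complex.sin y ^ 4 * Complex.sin z ^ 2 * Complex.cos z ^ 2 + (4) * Complex.sin x ^ 2 * Complex.cos y ^ 4 * Complex.sin z ^ 4 + (-8) * Complex.sin x ^ 2 * Complex.sin y ^ 2 * Complex.cos y ^ 2 * Complex.sin z ^ 2 * Complex.cos z ^ 2 + (4) * Complex.sin x ^ 2 * Complex.sin y ^ 4 * Complex.cos z ^ 4) * (Complex.sin_sq_add_cos_sq x) +
    ((4) * Complex.cos z ^ 4 + (-4) * Complex.cos y ^ 2 * Complex.cos z ^ 4 + (-8) * Complex.cos y ^ 2 * Complex.sin z ^ 2 * Complex.cos z ^ 2 + (4) * Complex.sin y ^ 2 * Complex.cos z ^ 4 + (-8) * Complex.cos x ^ 2 * Complex.cos z ^ 4 + (-8) * Complex.cos x ^ 2 * Complex.sin z ^ 2 * Complex.cos z ^ 2 + (-8) * Complex.cos x ^ 2 * Complex.cos y ^ 2 * Complex.sin z ^ 2 * Complex.cos z ^ 2 + (-8) * Complex.cos x ^ 2 * Complex.cos y ^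 2 * Complex.sin z ^ 4 + (-8) * Complex.cos x ^ 2 * Complex.sin y ^ 2 * Complex.cos z ^ 4 + (-8) * Complex.cos x ^ 2 * Complex.sin y ^ 2 * Complex.sin z ^ 2 * Complex.cos z ^ 2 + (4) * Complex.cos x ^ 4 * Complex.cos z ^ 4 + (8) * Complex.cos x ^ 4 * Complex.sin z ^ 2 * Complex.cos z ^ 2 + (4) * Complex.cos x ^ 4 * Complex.sin z ^ 4 + (4) * Complex.cos x ^ 4 * Complex.cos y ^ 2 * Complex.cos z ^ 4 + (8) * Complex.cos x ^ 4 * Complex.cos y ^ 2 * Complex.sin z ^ 2 * Complex.cos z ^ 2 + (4) * Complex.cos x ^ 4 * Complex.cos y ^ 2 * Complex.sin z ^ 4 + (4) * Complex.cos x ^ 4 * Complex.sin y ^ 2 * Complex.cos z ^ 4 + (8) * Complex.cos x ^ 4 * Complex.sin y ^ 2 * Complex.sin z ^ 2 * Complex.cos z ^ 2 + (4) * Complex.cos x ^ 4 * Complex.sin y ^ 2 * Complex.sin z ^ 4) * (Complex.sin_sq_add_cos_sq y) +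
    ((-8) * Complex.cos y ^ 2 * Complex.cos z ^ 2 + (4) * Complex.cos y ^ 4 + (4) * Complex.cos y ^ 4 * Complex.cos z ^ 2 + (4) * Complex.cos y ^ 4 * Complex.sin z ^ 2 + (-8) * Complex.cos x ^ 2 * Complex.cos z ^ 2 + (-8) * Complex.cos x ^ 2 * Complex.cos y ^ 2 + (8) * Complex.cos x ^ 2 * Complex.cos y ^ 2 * Complex.cos z ^ 2 + (-8) * Complex.cos x ^ 2 * Complex.cos y ^ 2 * Complex.sin z ^ 2 + (4) * Complex.cos x ^ 4 + (4) * Complex.cos x ^ 4 * Complex.cos z ^ 2 + (4) * Complex.cos x ^ 4 * Complex.sin z ^ 2) * (Complex.sin_sq_add_cos_sq z)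

noncomputable def Wf (q : ℝ) : ℂ → ℂ := fun κ => (1 + (q : ℂ) * κ) ^ ((1 : ℂ) / 2)

private lemma Wf0 (q : ℝ) : Wf q 0 = 1 := by simp [Wf]

private lemma Wfa (q : ℝ) : AnalyticAt ℂ (Wf q) 0 := by
  apply AnalyticAt.cpow (analyticAt_const.add (analyticAt_const.mul analyticAt_id)) analyticAt_const
  norm_num [Complex.mem_slitPlane_iff]

private lemma Wfd (q : ℝ) : HasDerivAt (Wf q) ((q : ℂ) / 2) 0 := by
  have h1 : HasDerivAt (fun κ : ℂ => 1 + (q : ℂ) * κ) (q : ℂ) 0 := by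
    simpa using (((hasDerivAt_id (0 : ℂ)).const_mul (q : ℂ)).const_add 1)
  have h2 := h1.cpow_const (c := (1 : ℂ)/2) (by norm_num [Complex.mem_slitPlane_iff])
  have e : (1 : ℂ)/2 * (1 + (q : ℂ) * 0) ^ ((1 : ℂ)/2 - 1) * (q : ℂ) = (q : ℂ)/2 := by
    rw [show (1 : ℂ) + (q : ℂ) * 0 = 1 by ring, Complex.one_cpow]; ring
  exact e ▸ h2

private lemma factorO (u : ℂ → ℂ) (d e m : ℂ) (hu : AnalyticAt ℂ u 0) (hud : HasDerivAt u d 0)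
    (hu0 : u 0 = e) (hcos : Complex.cos e = 0) (hm : m = -Complex.sin e * d) :
    (fun κ => Complex.cos (u κ)) =O[nhds 0] (fun κ : ℂ => κ) ∧
    (fun κ => Complex.cos (u κ) - m * κ) =O[nhds 0] (fun κ : ℂ => κ ^ 2) := by
  have hF : AnalyticAt ℂ (fun κ => Complex.cos (u κ)) 0 := by
    have := (Complex.differentiable_cos.analyticAt (u 0)).comp hu
    simpa [Function.comp_def] using this
  have hF0 : Complex.cos (u 0) = 0 := by rw [hu0]; exact hcos
  have hFd : HasDerivAt (fun κ => Complex.cos (u κ)) (-Complex.sin (u 0) * d) 0 := hud.ccos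
  constructor
  · exact linO hF hF0
  · apply quadO
    · exact hF.sub (analyticAt_const.mul analyticAt_id)
    · simp [hF0]
    · have hGd : HasDerivAt (fun κ => Complex.cos (u κ) - m * κ)
        (-Complex.sin (u 0) * d - m * 1) 0 := hFd.sub ((hasDerivAt_id 0).const_mul m)
      rw [hGd.deriv, hu0, hm]; ring

/-- Series expansion of the trace polynomial: with
`νₖ = ½ - ½√(1 + qₖκ)`, `tₖ = cos(2πνₖ)` and
`φ = 1 - t₀² - t₁² - t₂² + 2t₀t₁t₂`, one has `φ(κ) = cκ⁴ + O(κ⁵)` at `κ = 0`,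
where `c = (π⁴/64)(q₀+q₁+q₂)(-q₀+q₁+q₂)(q₀-q₁+q₂)(q₀+q₁-q₂)`. -/
theorem stmt12 (q₀ q₁ q₂ : ℝ) (ν t : ℝ → ℂ → ℂ) (φ : ℂ → ℂ) (c : ℂ)
    (hν : ∀ (qk : ℝ) (κ : ℂ), ν qk κ = 1 / 2 - 1 / 2 * (1 + (qk : ℂ) * κ) ^ ((1 : ℂ) / 2))
    (ht : ∀ (qk : ℝ) (κ : ℂ), t qk κ = Complex.cos (2 * (Real.pi : ℂ) * ν qk κ))
    (hφ : ∀ κ : ℂ, φ κ = 1 - (t q₀ κ) ^ 2 - (t q₁ κ) ^ 2 - (t q₂ κ) ^ 2 +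
      2 * t q₀ κ * t q₁ κ * t q₂ κ)
    (hc : c = ((Real.pi ^ 4 / 64 : ℝ) : ℂ) *
      (((q₀ + q₁ + q₂ : ℝ) : ℂ) * ((-q₀ + q₁ + q₂ : ℝ) : ℂ) *
       ((q₀ - q₁ + q₂ : ℝ) : ℂ) * ((q₀ + q₁ - q₂ : ℝ) : ℂ))) :
    (fun κ : ℂ => φ κ - c * κ ^ 4) =O[nhds 0] (fun κ : ℂ => κ ^ 5) := by
  have hT : ∀ (q : ℝ) (κ : ℂ),
      t q κ = -Complex.cos (2 * ((Real.pi : ℂ)/2 * Wf q κ)) := by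
    intro q κ
    rw [ht, hν]
    have harg : 2 * (Real.pi : ℂ) * (1 / 2 - 1 / 2 * (1 + (q : ℂ) * κ) ^ ((1 : ℂ) / 2))
        = (Real.pi : ℂ) - 2 * ((Real.pi : ℂ)/2 * Wf q κ) := by
      simp only [Wf]; ring
    rw [harg, Complex.cos_pi_sub]
  -- the four linear coefficients
  set m₁ : ℂ := (Real.pi : ℂ) * ((q₀ : ℂ) + q₁ + q₂) / 4 with hm₁
  set m₂ : ℂ := -((Real.pi : ℂ) * ((q₁ : ℂ) + q₂ - q₀) / 4) with hm₂
  set m₃ : ℂ := -((Real.pi : ℂ) * ((q₀ : ℂ) + q₂ - q₁) / 4) with hm₃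
  set m₄ : ℂ := -((Real.pi : ℂ) * ((q₀ : ℂ) + q₁ - q₂) / 4) with hm₄
  -- factor 1
  obtain ⟨hl₁, hq₁⟩ := factorO
    (fun κ => (Real.pi : ℂ)/2 * Wf q₀ κ + (Real.pi : ℂ)/2 * Wf q₁ κ + (Real.pi : ℂ)/2 * Wf q₂ κ)
    ((Real.pi : ℂ)/2 * ((q₀ : ℂ)/2) + (Real.pi : ℂ)/2 * ((q₁ : ℂ)/2) + (Real.pi : ℂ)/2 * ((q₂ : ℂ)/2))
    ((Real.pi : ℂ) + (Real.pi : ℂ)/2) m₁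
    (((analyticAt_const.mul (Wfa q₀)).add (analyticAt_const.mul (Wfa q₁))).add
      (analyticAt_const.mul (Wfa q₂)))
    ((((Wfd q₀).const_mul _).add ((Wfd q₁).const_mul _)).add ((Wfd q₂).const_mul _))
    (by simp only [Wf0]; ring)
    (by simp [Complex.cos_add])
    (by rw [Complex.sin_add]; simp; rw [hm₁]; ring)
  -- factor 2
  obtain ⟨hl₂, hq₂⟩ := factorO
    (fun κ => (Real.pi : ℂ)/2 * Wf q₁ κ + (Real.pi : ℂ)/2 * Wf q₂ κ - (Real.pi : ℂ)/2 * Wf q₀ κ)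
    ((Real.pi : ℂ)/2 * ((q₁ : ℂ)/2) + (Real.pi : ℂ)/2 * ((q₂ : ℂ)/2) - (Real.pi : ℂ)/2 * ((q₀ : ℂ)/2))
    ((Real.pi : ℂ)/2) m₂
    (((analyticAt_const.mul (Wfa q₁)).add (analyticAt_const.mul (Wfa q₂))).sub
      (analyticAt_const.mul (Wfa q₀)))
    ((((Wfd q₁).const_mul _).add ((Wfd q₂).const_mul _)).sub ((Wfd q₀).const_mul _))
    (by simp only [Wf0]; ring)
    (by simp)
    (by simp; rw [hm₂]; ring)
  -- factor 3
  obtain ⟨hl₃, hq₃⟩ := factorO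
    (fun κ => (Real.pi : ℂ)/2 * Wf q₀ κ + (Real.pi : ℂ)/2 * Wf q₂ κ - (Real.pi : ℂ)/2 * Wf q₁ κ)
    ((Real.pi : ℂ)/2 * ((q₀ : ℂ)/2) + (Real.pi : ℂ)/2 * ((q₂ : ℂ)/2) - (Real.pi : ℂ)/2 * ((q₁ : ℂ)/2))
    ((Real.pi : ℂ)/2) m₃
    (((analyticAt_const.mul (Wfa q₀)).add (analyticAt_const.mul (Wfa q₂))).sub
      (analyticAt_const.mul (Wfa q₁)))
    ((((Wfd q₀).const_mul _).add ((Wfd q₂).const_mul _)).sub ((Wfd q₁).const_mul _))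
    (by simp only [Wf0]; ring)
    (by simp)
    (by simp; rw [hm₃]; ring)
  -- factor 4
  obtain ⟨hl₄, hq₄⟩ := factorO
    (fun κ => (Real.pi : ℂ)/2 * Wf q₀ κ + (Real.pi : ℂ)/2 * Wf q₁ κ - (Real.pi : ℂ)/2 * Wf q₂ κ)
    ((Real.pi : ℂ)/2 * ((q₀ : ℂ)/2) + (Real.pi : ℂ)/2 * ((q₁ : ℂ)/2) - (Real.pi : ℂ)/2 * ((q₂ : ℂ)/2))
    ((Real.pi : ℂ)/2) m₄
    (((analyticAt_const.mul (Wfa q₀)).add (analyticAt_const.mul (Wfa q₁))).sub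
      (analyticAt_const.mul (Wfa q₂)))
    ((((Wfd q₀).const_mul _).add ((Wfd q₁).const_mul _)).sub ((Wfd q₂).const_mul _))
    (by simp only [Wf0]; ring)
    (by simp)
    (by simp; rw [hm₄]; ring)
  have hm₁O : (fun κ : ℂ => m₁ * κ) =O[nhds 0] (fun κ : ℂ => κ) :=
    (isBigO_refl (fun κ : ℂ => κ) _).const_mul_left m₁
  have hm₂O : (fun κ : ℂ => m₂ * κ) =O[nhds 0] (fun κ : ℂ => κ) :=
    (isBigO_refl (fun κ : ℂ => κ) _).const_mul_left m₂
  have hm₃O : (fun κ : ℂ => m₃ * κ) =O[nhds 0] (fun κ : ℂ => κ) :=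
    (isBigO_refl (fun κ : ℂ => κ) _).const_mul_left m₃
  have obound : ∀ {f g : ℂ → ℂ}, f =O[nhds 0] g → (∀ κ, g κ = κ ^ 5) →
      f =O[nhds 0] (fun κ : ℂ => κ ^ 5) := by
    intro f g h hg
    exact (funext hg : g = fun κ : ℂ => κ ^ 5) ▸ h
  have o1 := obound ((((hq₁.mul hl₂).mul hl₃).mul hl₄)) (fun κ => by ring)
  have o2 := obound ((((hm₁O.mul hq₂).mul hl₃).mul hl₄)) (fun κ => by ring)
  have o3 := obound ((((hm₁O.mul hm₂O).mul hq₃).mul hl₄)) (fun κ => by ring)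
  have o4 := obound ((((hm₁O.mul hm₂O).mul hm₃O).mul hq₄)) (fun κ => by ring)
  have key : ∀ κ : ℂ, φ κ - c * κ ^ 4 =
      -4 * ((Complex.cos ((Real.pi : ℂ)/2 * Wf q₀ κ + (Real.pi : ℂ)/2 * Wf q₁ κ + (Real.pi : ℂ)/2 * Wf q₂ κ) - m₁ * κ)
              * Complex.cos ((Real.pi : ℂ)/2 * Wf q₁ κ + (Real.pi : ℂ)/2 * Wf q₂ κ - (Real.pi : ℂ)/2 * Wf q₀ κ)
              * Complex.cos ((Real.pi : ℂ)/2 * Wf q₀ κ + (Real.pi : ℂ)/2 * Wf q₂ κ - (Real.pi : ℂ)/2 * Wf q₁ κ)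
              * Complex.cos ((Real.pi : ℂ)/2 * Wf q₀ κ + (Real.pi : ℂ)/2 * Wf q₁ κ - (Real.pi : ℂ)/2 * Wf q₂ κ)
            + (m₁ * κ)
              * (Complex.cos ((Real.pi : ℂ)/2 * Wf q₁ κ + (Real.pi : ℂ)/2 * Wf q₂ κ - (Real.pi : ℂ)/2 * Wf q₀ κ) - m₂ * κ)
              * Complex.cos ((Real.pi : ℂ)/2 * Wf q₀ κ + (Real.pi : ℂ)/2 * Wf q₂ κ - (Real.pi : ℂ)/2 * Wf q₁ κ)
              * Complex.cos ((Real.pi : ℂ)/2 * Wf q₀ κ + (Real.pi : ℂ)/2 * Wf q₁ κ - (Real.pi : ℂ)/2 * Wf q₂ κ)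
            + (m₁ * κ) * (m₂ * κ)
              * (Complex.cos ((Real.pi : ℂ)/2 * Wf q₀ κ + (Real.pi : ℂ)/2 * Wf q₂ κ - (Real.pi : ℂ)/2 * Wf q₁ κ) - m₃ * κ)
              * Complex.cos ((Real.pi : ℂ)/2 * Wf q₀ κ + (Real.pi : ℂ)/2 * Wf q₁ κ - (Real.pi : ℂ)/2 * Wf q₂ κ)
            + (m₁ * κ) * (m₂ * κ) * (m₃ * κ)
              * (Complex.cos ((Real.pi : ℂ)/2 * Wf q₀ κ + (Real.pi : ℂ)/2 * Wf q₁ κ - (Real.pi : ℂ)/2 * Wf q₂ κ) - m₄ * κ)) := by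
    intro κ
    have h := tri ((Real.pi : ℂ)/2 * Wf q₀ κ) ((Real.pi : ℂ)/2 * Wf q₁ κ) ((Real.pi : ℂ)/2 * Wf q₂ κ)
    rw [hφ, hT q₀ κ, hT q₁ κ, hT q₂ κ, hc, hm₁, hm₂, hm₃, hm₄]
    push_cast
    linear_combination h
  rw [show (fun κ : ℂ => φ κ - c * κ ^ 4) = _ from funext key]
  exact IsBigO.const_mul_left (((o1.add o2).add o3).add o4) (-4)
end
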